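/- Let φ : F_p((t)) → Aut(F_p((t))^d) be a continuous group homomorphism (Aut with the Braconnier topology) satisfying φ(t·f) = τ ∘ φ(f) ∘ τ^{-1} for all f ∈ F_p((t)), where τ is coordinatewise multiplication by t. Then there exists a compact open subgroup V ≤ F_p((t))^d such that φ(f)(V) = V for every f ∈ F_p[[t]] and τ(V) ⊆ V. -/

import Mathlib

/-- Coordinatewise multiplication by `t^j` (`j ∈ ℤ`) on `F_p((t))^d`, i.e. `τ^j`. -/
noncomputable def tauZ (p d : ℕ) (j : ℤ) (z : Fin d → LaurentSeries (ZMod p)) :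
    Fin d → LaurentSeries (ZMod p) :=
  fun r => HahnSeries.single j (1 : ZMod p) * z r

/-- The subring `F_p[[t]]` of `F_p((t))`: Laurent series without negative terms. -/
def intLS (p : ℕ) : Set (LaurentSeries (ZMod p)) :=
  {f | ∀ i : ℤ, i < 0 → f.coeff i = 0}

open HahnSeries LaurentSeries Filter
open scoped Topology Multiplicative

section aux

variable (p : ℕ) [Fact p.Prime]

/-- coefficient extraction as an additive hom -/
def coeffHom (n : ℤ) : LaurentSeries (ZMod p) →+ ZMod p where
  toFun f := f.coeff n
  map_zero' := rfl
  map_add' _ _ := rfl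

/-- The subgroup of Laurent series with coefficients vanishing below `m`. -/
def Xgrp (m : ℤ) : AddSubgroup (LaurentSeries (ZMod p)) where
  carrier := {f | ∀ i : ℤ, i < m → f.coeff i = 0}
  zero_mem' := fun _ _ => rfl
  add_mem' := fun {a b} ha hb i hi => by
    rw [HahnSeries.coeff_add, ha i hi, hb i hi, add_zero]
  neg_mem' := fun {a} ha i hi => by
    rw [HahnSeries.coeff_neg, ha i hi, neg_zero]

lemma mem_Xgrp_iff_val {m : ℤ} {f : LaurentSeries (ZMod p)} :
    f ∈ Xgrp p m ↔ Valued.v f ≤ WithZero.exp (-m) := by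
  rw [LaurentSeries.valuation_le_iff_coeff_lt_eq_zero]
  rfl

lemma Xgrp_mem_nhds (m : ℤ) : ((Xgrp p m : Set (LaurentSeries (ZMod p)))) ∈ 𝓝 (0 : LaurentSeries (ZMod p)) := by
  rw [Valued.mem_nhds_zero]
  have hs : (HahnSeries.single m (1 : ZMod p) : LaurentSeries (ZMod p)) ∈ Xgrp p m := fun i hi => by
    rw [HahnSeries.coeff_single, if_neg (ne_of_lt hi)]
  have hs0 : (HahnSeries.single m (1 : ZMod p) : LaurentSeries (ZMod p)) ≠ 0 := by simp
  refine ⟨Units.mk0 (Valued.v.restrict (HahnSeries.single m (1 : ZMod p) : LaurentSeries (ZMod p)))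
    (by simp only [ne_eq, map_eq_zero]; exact hs0), fun x hx => ?_⟩
  have hx' : Valued.v x < Valued.v (HahnSeries.single m (1 : ZMod p) : LaurentSeries (ZMod p)) :=
    (Valued.v.restrict_lt_iff).mp hx
  exact (mem_Xgrp_iff_val p).2 (le_of_lt (lt_of_lt_of_le hx' ((mem_Xgrp_iff_val p).1 hs)))

lemma Xgrp_isOpen (m : ℤ) : IsOpen ((Xgrp p m : Set (LaurentSeries (ZMod p)))) :=
  AddSubgroup.isOpen_of_mem_nhds _ (Xgrp_mem_nhds p m)

lemma Xgrp_anti {m m' : ℤ} (h : m' ≤ m) : (Xgrp p m : Set (LaurentSeries (ZMod p))) ⊆ Xgrp p m' :=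
  fun f hf i hi => hf i (lt_of_lt_of_le hi h)

lemma exists_Xgrp_subset {W : Set (LaurentSeries (ZMod p))} (hW : W ∈ 𝓝 (0 : LaurentSeries (ZMod p))) :
    ∃ m : ℕ, (Xgrp p m : Set (LaurentSeries (ZMod p))) ⊆ W := by
  rw [Valued.mem_nhds_zero] at hW
  obtain ⟨γ, hγ⟩ := hW
  set D := -(WithZero.log (MonoidWithZeroHom.ValueGroup₀.embedding γ.1) - 1) with hD₀
  have hD : WithZero.exp (-D) < MonoidWithZeroHom.ValueGroup₀.embedding γ.1 := by
    rw [← WithZero.lt_log_iff_exp_lt (by simp), hD₀]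
    simp
  refine ⟨D.toNat, fun f hf => hγ ?_⟩
  have h1 : Valued.v f ≤ WithZero.exp (-((D.toNat : ℕ) : ℤ)) := (mem_Xgrp_iff_val p).1 hf
  show Valued.v.restrict f < γ.1
  rw [Valuation.restrict_lt_iff_lt_embedding]
  refine lt_of_le_of_lt (le_trans h1 ?_) hD
  rw [WithZero.exp_le_exp]
  have := Int.self_le_toNat D
  omega


lemma sum_single_coeff (m : ℕ) (a : Fin m → ZMod p) (n : ℤ) :
    (∑ i : Fin m, HahnSeries.single (i : ℤ) (a i)).coeff n
      = ∑ i : Fin m, (HahnSeries.single (i : ℤ) (a i)).coeff n :=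
  map_sum (coeffHom p n) _ _

lemma Xgrp_zero_compact : IsCompact ((Xgrp p 0 : Set (LaurentSeries (ZMod p)))) := by
  rw [isCompact_iff_totallyBounded_isComplete]
  constructor
  · rw [totallyBounded_iff_subset_finite_iUnion_nhds_zero]
    intro U hU
    obtain ⟨m, hm⟩ := exists_Xgrp_subset p hU
    refine ⟨Set.range (fun a : Fin m → ZMod p => ∑ i : Fin m, HahnSeries.single (i : ℤ) (a i)),
      Set.finite_range _, fun f hf => ?_⟩
    rw [Set.mem_iUnion]
    refine ⟨∑ i : Fin m, HahnSeries.single (i : ℤ) (f.coeff i), ?_⟩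
    rw [Set.mem_iUnion]
    refine ⟨⟨fun i => f.coeff i, rfl⟩, ?_⟩
    rw [Set.mem_vadd_set_iff_neg_vadd_mem]
    apply hm
    intro n hn
    rw [vadd_eq_add]
    have hcoeff : (∑ i : Fin m, HahnSeries.single (i : ℤ) (f.coeff (i : ℤ))).coeff n = f.coeff n := by
      rw [sum_single_coeff]
      rcases lt_or_ge n 0 with h0 | h0
      · rw [hf n h0]
        apply Finset.sum_eq_zero
        intro i _
        rw [HahnSeries.coeff_single]
        simp only [ite_eq_right_iff]
        intro hni
        omega
      · have hnm : n.toNat < m := by omega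
        rw [Finset.sum_eq_single_of_mem (⟨n.toNat, hnm⟩ : Fin m) (Finset.mem_univ _)]
        · rw [HahnSeries.coeff_single]
          have : ((⟨n.toNat, hnm⟩ : Fin m) : ℤ) = n := by simp; omega
          rw [this, if_pos rfl]
        · intro i _ hi
          rw [HahnSeries.coeff_single, if_neg]
          intro hni
          apply hi
          apply Fin.ext
          simp at hni ⊢
          omega
    rw [HahnSeries.coeff_add, HahnSeries.coeff_neg, hcoeff, neg_add_cancel]
  · exact (AddSubgroup.isClosed_of_isOpen _ (Xgrp_isOpen p 0)).isComplete


lemma tau_coeff_aux (j i : ℤ) (f : LaurentSeries (ZMod p)) :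
    (HahnSeries.single j (1 : ZMod p) * f).coeff i = f.coeff (i - j) := by
  have h : (i - j) + j = i := by ring
  have := HahnSeries.coeff_single_mul_add (r := (1 : ZMod p)) (x := f) (a := i - j) (b := j)
  rw [h, one_mul] at this
  exact this

variable (d : ℕ)

lemma tauZ_add_exp (a b : ℤ) (z : Fin d → LaurentSeries (ZMod p)) :
    tauZ p d a (tauZ p d b z) = tauZ p d (a + b) z := by
  funext r
  show HahnSeries.single a (1 : ZMod p) * (HahnSeries.single b 1 * z r) = _
  rw [← mul_assoc, HahnSeries.single_mul_single, mul_one]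
  rfl

lemma tauZ_zero (z : Fin d → LaurentSeries (ZMod p)) : tauZ p d 0 z = z := by
  funext r
  show HahnSeries.single (0 : ℤ) (1 : ZMod p) * z r = z r
  rw [HahnSeries.single_zero_one, one_mul]

lemma tauZ_map_add (j : ℤ) (x y : Fin d → LaurentSeries (ZMod p)) :
    tauZ p d j (x + y) = tauZ p d j x + tauZ p d j y := by
  funext r
  show HahnSeries.single j (1 : ZMod p) * (x + y) r = _
  rw [Pi.add_apply, mul_add]
  rfl

lemma tauZ_map_neg (j : ℤ) (x : Fin d → LaurentSeries (ZMod p)) :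
    tauZ p d j (-x) = -tauZ p d j x := by
  funext r
  show HahnSeries.single j (1 : ZMod p) * (-x) r = _
  simp only [Pi.neg_apply]
  show HahnSeries.single j (1 : ZMod p) * (-(x r)) = -(HahnSeries.single j (1 : ZMod p) * x r)
  ring

lemma tauZ_map_zero (j : ℤ) : tauZ p d j (0 : Fin d → LaurentSeries (ZMod p)) = 0 := by
  funext r
  show HahnSeries.single j (1 : ZMod p) * (0 : Fin d → LaurentSeries (ZMod p)) r = _
  rw [Pi.zero_apply, mul_zero]

lemma tauZ_continuous (j : ℤ) : Continuous (tauZ p d j) := by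
  apply continuous_pi
  intro r
  exact continuous_const.mul (continuous_apply r)

lemma exists_pi_Xgrp_subset {W : Set (Fin d → LaurentSeries (ZMod p))}
    (hW : W ∈ 𝓝 (0 : Fin d → LaurentSeries (ZMod p))) :
    ∃ m : ℕ, (Set.univ.pi fun _ : Fin d => (Xgrp p m : Set (LaurentSeries (ZMod p)))) ⊆ W := by
  rw [nhds_pi, Filter.mem_pi] at hW
  obtain ⟨I, _, t, ht, hsub⟩ := hW
  choose mm hmm using fun r => exists_Xgrp_subset p (ht r)
  refine ⟨Finset.univ.sup mm, fun z hz => hsub fun r _ => ?_⟩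
  exact hmm r (Xgrp_anti p (by exact_mod_cast Finset.le_sup (Finset.mem_univ r)) (hz r (Set.mem_univ r)))

end aux

/-- Let `φ : F_p((t)) → Aut(F_p((t))^d)` be a homomorphism, continuous for the Braconnier
topology (equivalently here: both evaluation maps `(f,z) ↦ φ(f)(z)` and
`(f,z) ↦ φ(f)⁻¹(z)` are jointly continuous), satisfying `φ(t·f) = τ ∘ φ(f) ∘ τ⁻¹`.
Then there is a compact open subgroup `V ≤ F_p((t))^d` with `φ(f)(V) = V` for all
`f ∈ F_p[[t]]` and `τ(V) ⊆ V`. -/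
theorem invariant_compact_open_subgroup (p : ℕ) [Fact p.Prime] (d : ℕ) (hd : 0 < d)
    (φ : LaurentSeries (ZMod p) →
      ((Fin d → LaurentSeries (ZMod p)) ≃+ (Fin d → LaurentSeries (ZMod p))))
    (hhom : ∀ f g, φ (f + g) = (φ g).trans (φ f))
    (hcont : Continuous fun x :
        LaurentSeries (ZMod p) × (Fin d → LaurentSeries (ZMod p)) => φ x.1 x.2)
    (hcont' : Continuous fun x :
        LaurentSeries (ZMod p) × (Fin d → LaurentSeries (ZMod p)) => (φ x.1).symm x.2)
    (hequiv : ∀ (f : LaurentSeries (ZMod p)) (z : Fin d → LaurentSeries (ZMod p)),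
      φ (HahnSeries.single (1 : ℤ) (1 : ZMod p) * f) z =
        tauZ p d 1 (φ f (tauZ p d (-1) z))) :
    ∃ V : AddSubgroup (Fin d → LaurentSeries (ZMod p)),
      IsCompact (V : Set (Fin d → LaurentSeries (ZMod p))) ∧
      IsOpen (V : Set (Fin d → LaurentSeries (ZMod p))) ∧
      (∀ f ∈ intLS p, φ f '' (V : Set (Fin d → LaurentSeries (ZMod p))) = V) ∧
      (∀ v ∈ V, tauZ p d 1 v ∈ V) := by
  classical
  set G := Fin d → LaurentSeries (ZMod p) with hG
  -- basic homomorphism identities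
  have phi_add : ∀ f g (z : G), φ (f + g) z = φ f (φ g z) := by
    intro f g z
    rw [hhom f g]
    rfl
  have phi_zero : ∀ z : G, φ 0 z = z := by
    intro z
    have h := phi_add 0 0 z
    rw [add_zero] at h
    exact ((φ 0).injective h).symm
  have phi_neg_apply : ∀ f (z : G), φ f (φ (-f) z) = z := by
    intro f z
    have h := phi_add f (-f) z
    rw [add_neg_cancel] at h
    rw [← h, phi_zero]
  -- iterated conjugation relation
  have phi_pow : ∀ (j : ℕ) f (z : G),
      φ (HahnSeries.single (j : ℤ) (1 : ZMod p) * f) z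
        = tauZ p d j (φ f (tauZ p d (-(j : ℤ)) z)) := by
    intro j
    induction j with
    | zero =>
      intro f z
      simp only [Nat.cast_zero, neg_zero, tauZ_zero, HahnSeries.single_zero_one, one_mul]
    | succ j ih =>
      intro f z
      have hs : HahnSeries.single ((j + 1 : ℕ) : ℤ) (1 : ZMod p) * f
          = HahnSeries.single (1 : ℤ) 1 * (HahnSeries.single (j : ℤ) 1 * f) := by
        rw [← mul_assoc, HahnSeries.single_mul_single, mul_one]
        congr 1
        push_cast
        ring
      rw [hs, hequiv, ih, tauZ_add_exp, tauZ_add_exp,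
        show ((-(j : ℤ)) + -1) = -((j + 1 : ℕ) : ℤ) by push_cast; ring,
        show ((1 : ℤ) + (j : ℤ)) = ((j + 1 : ℕ) : ℤ) by push_cast; ring]
  have tau_phi_comm : ∀ (j : ℕ) f (z : G),
      tauZ p d j (φ f z) = φ (HahnSeries.single (j : ℤ) 1 * f) (tauZ p d j z) := by
    intro j f z
    rw [phi_pow j f (tauZ p d j z), tauZ_add_exp,
      show (-(j : ℤ) + (j : ℤ)) = 0 by ring, tauZ_zero]
  have shift_mem : ∀ (j : ℕ) f, f ∈ Xgrp p 0 →
      HahnSeries.single (j : ℤ) (1 : ZMod p) * f ∈ Xgrp p 0 := by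
    intro j f hf i hi
    rw [tau_coeff_aux]
    exact hf _ (by omega)
  -- the reference compact open subgroup
  set UU : AddSubgroup G := AddSubgroup.pi Set.univ (fun _ : Fin d => Xgrp p 0) with hUU
  have hUUcoe : (UU : Set G) = Set.univ.pi fun _ : Fin d => (Xgrp p 0 : Set (LaurentSeries (ZMod p))) :=
    AddSubgroup.coe_pi _ _
  have hUUopen : IsOpen (UU : Set G) := by
    rw [hUUcoe]
    exact isOpen_set_pi Set.finite_univ fun r _ => Xgrp_isOpen p 0
  have hUUcompact : IsCompact (UU : Set G) := by
    rw [hUUcoe]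
    exact isCompact_univ_pi fun r => Xgrp_zero_compact p
  -- the invariant subgroup
  set V : AddSubgroup G :=
    { carrier := {z : G | ∀ (j : ℕ), ∀ f ∈ Xgrp p 0, φ f (tauZ p d j z) ∈ UU}
      zero_mem' := by
        intro j f hf
        rw [tauZ_map_zero, map_zero]
        exact UU.zero_mem
      add_mem' := by
        intro a b ha hb j f hf
        rw [tauZ_map_add, map_add]
        exact UU.add_mem (ha j f hf) (hb j f hf)
      neg_mem' := by
        intro a ha j f hf
        rw [tauZ_map_neg, map_neg]
        exact UU.neg_mem (ha j f hf) } with hV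
  have memV : ∀ z : G, z ∈ V ↔ ∀ (j : ℕ), ∀ f ∈ Xgrp p 0, φ f (tauZ p d j z) ∈ UU :=
    fun z => Iff.rfl
  -- tau stability of pi groups
  have tau_mem_pi : ∀ (m : ℕ) (j : ℕ) (z : G),
      z ∈ Set.univ.pi (fun _ : Fin d => (Xgrp p m : Set (LaurentSeries (ZMod p)))) →
      tauZ p d j z ∈ Set.univ.pi (fun _ : Fin d => (Xgrp p m : Set (LaurentSeries (ZMod p)))) := by
    intro m j z hz r _
    intro i hi
    show (HahnSeries.single (j : ℤ) (1 : ZMod p) * z r).coeff i = 0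
    rw [tau_coeff_aux]
    exact hz r (Set.mem_univ r) _ (by omega)
  -- openness of V
  have hScompact : IsCompact (intLS p) := Xgrp_zero_compact p
  have hnopen : IsOpen ((fun x : LaurentSeries (ZMod p) × G => φ x.1 x.2) ⁻¹' (UU : Set G)) :=
    hUUopen.preimage hcont
  have hsub : (intLS p) ×ˢ ({0} : Set G) ⊆
      (fun x : LaurentSeries (ZMod p) × G => φ x.1 x.2) ⁻¹' (UU : Set G) := by
    rintro ⟨f, z⟩ ⟨hf, hz⟩
    simp only [Set.mem_singleton_iff] at hz
    subst hz
    show φ f 0 ∈ UU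
    rw [map_zero]
    exact UU.zero_mem
  obtain ⟨u, v, hu, hv, hsu, hsv, huv⟩ :=
    generalized_tube_lemma hScompact isCompact_singleton hnopen hsub
  have hv0 : v ∈ 𝓝 (0 : G) := hv.mem_nhds (hsv rfl)
  obtain ⟨m, hm⟩ := exists_pi_Xgrp_subset p d hv0
  have key : Set.univ.pi (fun _ : Fin d => (Xgrp p m : Set (LaurentSeries (ZMod p)))) ⊆ (V : Set G) := by
    intro z hz
    rw [SetLike.mem_coe, memV]
    intro j f hf
    have h1 : f ∈ intLS p := hf
    have h2 : tauZ p d j z ∈ v := hm (tau_mem_pi m j z hz)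
    exact huv (Set.mk_mem_prod (hsu h1) h2)
  have hVopen : IsOpen (V : Set G) := by
    apply AddSubgroup.isOpen_of_mem_nhds (g := (0 : G))
    exact Filter.mem_of_superset
      (set_pi_mem_nhds Set.finite_univ fun r _ => Xgrp_mem_nhds p m) key
  have hVclosed : IsClosed (V : Set G) := AddSubgroup.isClosed_of_isOpen V hVopen
  have hVsubUU : (V : Set G) ⊆ (UU : Set G) := by
    intro z hz
    rw [SetLike.mem_coe, memV] at hz
    have h := hz 0 0 (Xgrp p 0).zero_mem
    rwa [Nat.cast_zero, tauZ_zero, phi_zero] at h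
  have hVcompact : IsCompact (V : Set G) := hUUcompact.of_isClosed_subset hVclosed hVsubUU
  have hVinv : ∀ f ∈ Xgrp p 0, ∀ z ∈ V, φ f z ∈ V := by
    intro f hf z hz
    rw [memV]
    intro j g hg
    rw [tau_phi_comm j f z, ← phi_add]
    exact (memV z).1 hz j _ ((Xgrp p 0).add_mem hg (shift_mem j f hf))
  refine ⟨V, hVcompact, hVopen, ?_, ?_⟩
  · intro f hf
    have hf' : f ∈ Xgrp p 0 := hf
    apply Set.Subset.antisymm
    · rintro _ ⟨z, hz, rfl⟩
      exact hVinv f hf' z hz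
    · intro z hz
      exact ⟨φ (-f) z, hVinv (-f) ((Xgrp p 0).neg_mem hf') z hz, phi_neg_apply f z⟩
  · intro w hw
    rw [memV]
    intro j f hf
    rw [tauZ_add_exp, show ((j : ℤ) + 1) = ((j + 1 : ℕ) : ℤ) by push_cast; ring]
    exact (memV w).1 hw (j + 1) f hf
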